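/- arXiv:math/0102076 — 5 statements merged into one kernel-verified Lean document; each statement's English description precedes it below -/
import Mathlib

section
/- Let V be an idempotent b-space over a b-complete idempotent semifield and let W ⊆ V be a wo-closed subsemigroup. Then for any subset X ⊆ W bounded above in V, the supremum ⊕X (taken in V) belongs to W. In particular, every wo-closed subspace of V is b-closed. -/
/-- An idempotent commutative semigroup. -/
structure IdemSemigroup (S : Type*) where
  add : S → S → S
  add_comm : ∀ x y, add x y = add y x
  add_assoc : ∀ x y z, add (add x y) z = add x (add y z)
  add_idem : ∀ x, add x x = x

namespace IdemSemigroup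
variable {S : Type*}

/-- The canonical order: x ≼ y iff x ⊕ y = y. -/
def le (A : IdemSemigroup S) (x y : S) : Prop := A.add x y = y
def UB (A : IdemSemigroup S) (X : Set S) (b : S) : Prop := ∀ x ∈ X, A.le x b
def LB (A : IdemSemigroup S) (X : Set S) (b : S) : Prop := ∀ x ∈ X, A.le b x
def IsSup (A : IdemSemigroup S) (X : Set S) (s : S) : Prop :=
  A.UB X s ∧ ∀ b, A.UB X b → A.le s b
def IsInf (A : IdemSemigroup S) (X : Set S) (s : S) : Prop :=
  A.LB X s ∧ ∀ b, A.LB X b → A.le b s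
/-- b-completeness: every subset bounded above (including ∅) has a least upper bound. -/
def BComplete (A : IdemSemigroup S) : Prop :=
  ∀ X : Set S, (∃ b, A.UB X b) → ∃ s, A.IsSup X s
/-- Linearly ordered subset. -/
def Chain (A : IdemSemigroup S) (X : Set S) : Prop :=
  ∀ x ∈ X, ∀ y ∈ X, A.le x y ∨ A.le y x

end IdemSemigroup

/-- An idempotent semifield: idempotent semiring with all nonzero elements invertible. -/
structure IdemSemifield (K : Type*) extends IdemSemigroup K where
  mul : K → K → K
  one : K
  zero : K
  mul_assoc : ∀ x y z, mul (mul x y) z = mul x (mul y z)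
  one_mul : ∀ x, mul one x = x
  mul_one : ∀ x, mul x one = x
  zero_add : ∀ x, add zero x = x
  zero_mul : ∀ x, mul zero x = zero
  mul_zero : ∀ x, mul x zero = zero
  left_distrib : ∀ x y z, mul x (add y z) = add (mul x y) (mul x z)
  right_distrib : ∀ x y z, mul (add x y) z = add (mul x z) (mul y z)
  inv_exists : ∀ x, x ≠ zero → ∃ y, mul x y = one ∧ mul y x = one

namespace IdemSemifield
variable {K : Type*}
def BComplete (F : IdemSemifield K) : Prop := F.toIdemSemigroup.BComplete
def pow (F : IdemSemifield K) (x : K) : ℕ → K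
  | 0 => F.one
  | n + 1 => F.mul x (F.pow x n)
/-- Algebraically closed: n-th roots exist. -/
def AlgClosed (F : IdemSemifield K) : Prop :=
  ∀ x : K, ∀ n : ℕ, 0 < n → ∃ y, F.pow y n = x
end IdemSemifield

/-- An idempotent semimodule over an idempotent semifield. -/
structure IdemSemimodule {K : Type*} (F : IdemSemifield K) (V : Type*) extends
    IdemSemigroup V where
  smul : K → V → V
  zero : V
  zero_add : ∀ x, add zero x = x
  smul_smul : ∀ a b x, smul a (smul b x) = smul (F.mul a b) x
  add_smul : ∀ a b x, smul (F.add a b) x = add (smul a x) (smul b x)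
  smul_add : ∀ a x y, smul a (add x y) = add (smul a x) (smul a y)
  zero_smul : ∀ x, smul F.zero x = zero
  one_smul : ∀ x, smul F.one x = x

/-- An idempotent b-space: b-complete semimodule, scalar multiplication compatible
with bounded sups and infs of scalars. -/
structure IdemBSpace {K : Type*} (F : IdemSemifield K) (V : Type*) extends
    IdemSemimodule F V where
  bcomplete : toIdemSemigroup.BComplete
  smul_sup : ∀ (Q : Set K) (x : V) (s : K), Q.Nonempty →
    F.toIdemSemigroup.IsSup Q s →
    toIdemSemigroup.IsSup ((fun a => smul a x) '' Q) (smul s x)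
  smul_inf : ∀ (Q : Set K) (x : V) (s : K), Q.Nonempty →
    (∃ b, F.toIdemSemigroup.UB Q b) →
    F.toIdemSemigroup.IsInf Q s →
    toIdemSemigroup.IsInf ((fun a => smul a x) '' Q) (smul s x)

namespace IdemBSpace
variable {K V : Type*} {F : IdemSemifield K}

def le (B : IdemBSpace F V) (x y : V) : Prop := B.toIdemSemigroup.le x y
def IsSup (B : IdemBSpace F V) (X : Set V) (s : V) : Prop := B.toIdemSemigroup.IsSup X s
def IsInf (B : IdemBSpace F V) (X : Set V) (s : V) : Prop := B.toIdemSemigroup.IsInf X s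
def Chain (B : IdemBSpace F V) (X : Set V) : Prop := B.toIdemSemigroup.Chain X

def Subspace (B : IdemBSpace F V) (W : Set V) : Prop :=
  (∀ x ∈ W, ∀ y ∈ W, B.add x y ∈ W) ∧ (∀ (a : K), ∀ x ∈ W, B.smul a x ∈ W)

/-- wo-closed: sups of bounded linearly ordered subsets and infs of nonempty linearly
ordered subsets (taken in V) belong to the set. -/
def WOClosed (B : IdemBSpace F V) (M : Set V) : Prop :=
  ∀ X ⊆ M, B.Chain X →
    (∀ s, B.IsSup X s → s ∈ M) ∧ (∀ s, X.Nonempty → B.IsInf X s → s ∈ M)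

/-- Archimedean element. -/
def ArchElem (B : IdemBSpace F V) (x : V) : Prop :=
  ∀ y, ∃ a : K, B.le y (B.smul a x)

/-- f is the functional x*: x*(y) = inf { k | k ⊙ x ≽ y }. -/
def IsStar (B : IdemBSpace F V) (x : V) (f : V → K) : Prop :=
  ∀ y, F.toIdemSemigroup.IsInf {k | B.le y (B.smul k x)} (f y)

/-- wo-continuity of the functional f: it preserves sups and infs of bounded
linearly ordered subsets. -/
def WOContStar (B : IdemBSpace F V) (f : V → K) : Prop :=
  (∀ X : Set V, B.Chain X → ∀ s, B.IsSup X s → F.toIdemSemigroup.IsSup (f '' X) (f s)) ∧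
  (∀ X : Set V, B.Chain X → X.Nonempty → ∀ s, B.IsInf X s →
    F.toIdemSemigroup.IsInf (f '' X) (f s))

/-- wo-continuous element: its star functional is wo-continuous. -/
def WOContElem (B : IdemBSpace F V) (x : V) : Prop :=
  ∃ f, B.IsStar x f ∧ B.WOContStar f

/-- Archimedean space: contains a wo-continuous Archimedean element. -/
def ArchSpace (B : IdemBSpace F V) : Prop :=
  ∃ x, B.ArchElem x ∧ B.WOContElem x

/-- The subspace W, with the induced structure, is an Archimedean space. -/
def ArchOn (B : IdemBSpace F V) (W : Set V) : Prop :=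
  ∃ x ∈ W, (∀ y ∈ W, ∃ a : K, B.le y (B.smul a x)) ∧
    ∃ f : V → K,
      (∀ y ∈ W, F.toIdemSemigroup.IsInf {k | B.le y (B.smul k x)} (f y)) ∧
      (∀ X ⊆ W, B.Chain X → ∀ s ∈ W, B.IsSup X s →
        F.toIdemSemigroup.IsSup (f '' X) (f s)) ∧
      (∀ X ⊆ W, B.Chain X → X.Nonempty → ∀ s ∈ W, B.IsInf X s →
        F.toIdemSemigroup.IsInf (f '' X) (f s))

/-- b-linear map of the space into itself. -/
def BLinearMap (B : IdemBSpace F V) (g : V → V) : Prop :=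
  (∀ x y, g (B.add x y) = B.add (g x) (g y)) ∧
  (∀ (a : K) x, g (B.smul a x) = B.smul a (g x)) ∧
  (∀ (X : Set V) s, B.IsSup X s → B.IsSup (g '' X) (g s))

/-- b-linear functional. -/
def BLinearFun (B : IdemBSpace F V) (f : V → K) : Prop :=
  (∀ x y, f (B.add x y) = F.add (f x) (f y)) ∧
  (∀ (a : K) x, f (B.smul a x) = F.mul a (f x)) ∧
  (∀ (X : Set V) s, B.IsSup X s → F.toIdemSemigroup.IsSup (f '' X) (f s))

/-- ∧-subspace: closed under scalar multiplication and infima of nonempty subsets. -/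
def WedgeSub (B : IdemBSpace F V) (W : Set V) : Prop :=
  (∀ (a : K), ∀ x ∈ W, B.smul a x ∈ W) ∧
  (∀ X ⊆ W, X.Nonempty → ∃ s ∈ W, (∀ x ∈ X, B.le s x) ∧
    ∀ b ∈ W, (∀ x ∈ X, B.le b x) → B.le b s)

end IdemBSpace

/-- Bounded upper semicontinuous maps X → K. -/
def USCset {K : Type*} (F : IdemSemifield K) (X : Type*) [TopologicalSpace X] :
    Set (X → K) :=
  {f | (∃ b, ∀ t, F.toIdemSemigroup.le (f t) b) ∧
    ∀ b, IsClosed {t | F.toIdemSemigroup.le b (f t)}}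

section StmtSixAux

variable {K V : Type*}

private lemma sg_le_refl {S : Type*} (A : IdemSemigroup S) (x : S) : A.le x x :=
  A.add_idem x

private lemma sg_le_trans {S : Type*} (A : IdemSemigroup S) {x y z : S}
    (h1 : A.le x y) (h2 : A.le y z) : A.le x z := by
  unfold IdemSemigroup.le at *
  calc A.add x z = A.add x (A.add y z) := by rw [h2]
    _ = A.add (A.add x y) z := (A.add_assoc x y z).symm
    _ = A.add y z := by rw [h1]
    _ = z := h2

private lemma sg_le_antisymm {S : Type*} (A : IdemSemigroup S) {x y : S}
    (h1 : A.le x y) (h2 : A.le y x) : x = y := by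
  unfold IdemSemigroup.le at *
  rw [← h2, A.add_comm, h1]

private lemma stmt6_key (F : IdemSemifield K) (B : IdemBSpace F V) (W : Set V)
    (hW : B.WOClosed W) (hsub : ∀ x ∈ W, ∀ y ∈ W, B.add x y ∈ W) :
    ∀ X ⊆ W, ∀ s, B.IsSup X s → s ∈ W := by
  intro X hXW s hs
  set A := B.toIdemSemigroup with hA
  -- The set of elements of W below s
  set Y : Set V := {w | w ∈ W ∧ A.le w s} with hY
  -- Zorn's lemma on the subtype Y with relation induced by A.le
  have hzorn : ∃ m : Y, ∀ a : Y, A.le m.1 a.1 → A.le a.1 m.1 := by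
    apply exists_maximal_of_chains_bounded
      (r := fun a b : Y => A.le a.1 b.1)
    · intro c hc
      -- the image of the chain in V
      have hchain : B.Chain (Subtype.val '' c) := by
        rintro x ⟨⟨x', hx'⟩, hxc, rfl⟩ y ⟨⟨y', hy'⟩, hyc, rfl⟩
        by_cases hxy : (⟨x', hx'⟩ : Y) = ⟨y', hy'⟩
        · left
          have : x' = y' := congrArg Subtype.val hxy
          show A.le x' y'
          rw [this]; exact sg_le_refl A y'
        · exact hc hxc hyc hxy
      have hsubW : Subtype.val '' c ⊆ W := by
        rintro x ⟨⟨x', hx'⟩, _, rfl⟩; exact hx'.1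
      have hbdd : ∃ b, A.UB (Subtype.val '' c) b := by
        refine ⟨s, ?_⟩
        rintro x ⟨⟨x', hx'⟩, _, rfl⟩; exact hx'.2
      obtain ⟨t, ht⟩ := B.bcomplete _ hbdd
      have htW : t ∈ W := (hW _ hsubW hchain).1 t ht
      have hts : A.le t s := ht.2 s (by
        rintro x ⟨⟨x', hx'⟩, _, rfl⟩; exact hx'.2)
      refine ⟨⟨t, htW, hts⟩, ?_⟩
      intro a hac
      exact ht.1 a.1 ⟨a, hac, rfl⟩
    · intro a b c h1 h2; exact sg_le_trans A h1 h2
  obtain ⟨m, hm⟩ := hzorn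
  -- m is an upper bound of X
  have hub : A.UB X m.1 := by
    intro x hx
    have hxW : x ∈ W := hXW hx
    have hxs : A.le x s := hs.1 x hx
    have haddW : B.add m.1 x ∈ W := hsub m.1 m.2.1 x hxW
    have hadds : A.le (B.add m.1 x) s := by
      show A.add (A.add m.1 x) s = s
      rw [A.add_assoc, hxs, m.2.2]
    have hm_le : A.le m.1 (B.add m.1 x) := by
      show A.add m.1 (A.add m.1 x) = A.add m.1 x
      rw [← A.add_assoc, A.add_idem]
    have := hm ⟨B.add m.1 x, haddW, hadds⟩ hm_le
    -- this : A.le (B.add m.1 x) m.1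
    have hx_le : A.le x (B.add m.1 x) := by
      show A.add x (A.add m.1 x) = A.add m.1 x
      rw [A.add_comm m.1 x, ← A.add_assoc, A.add_idem]
    exact sg_le_trans A hx_le this
  have hsm : A.le s m.1 := hs.2 m.1 hub
  have : s = m.1 := sg_le_antisymm A hsm m.2.2
  rw [this]; exact m.2.1

end StmtSixAux

/-- Sups (in V) of subsets of a wo-closed subsemigroup of a b-space lie in the
subsemigroup; in particular every wo-closed subspace is b-closed. -/
theorem stmt6 {K V : Type*} (F : IdemSemifield K) (hF : F.BComplete)
    (B : IdemBSpace F V) (W : Set V) (hW : B.WOClosed W)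
    (hsub : ∀ x ∈ W, ∀ y ∈ W, B.add x y ∈ W) :
    (∀ X ⊆ W, ∀ s, B.IsSup X s → s ∈ W) ∧
    (∀ W' : Set V, B.Subspace W' → B.WOClosed W' →
      ∀ X ⊆ W', ∀ s, B.IsSup X s → s ∈ W') :=
  ⟨stmt6_key F B W hW hsub,
   fun W' hsub' hW' => stmt6_key F B W' hW' hsub'.1⟩
end

section
/- Let V be an idempotent b-space over a b-complete idempotent semifield K and let x ∈ V be an Archimedean element. Then the functional x*(y) = inf { k ∈ K : k ⊙ x ≽ y } is well-defined, b-linear (preserves ⊕, scalar multiplication, and suprema of bounded sets), and satisfies x*(y) ⊙ x ≽ y for all y ∈ V. -/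
namespace IdemSemigroup
variable {S : Type*} (A : IdemSemigroup S)

lemma le_refl' (x : S) : A.le x x := A.add_idem x

lemma le_trans' {x y z : S} (h1 : A.le x y) (h2 : A.le y z) : A.le x z := by
  unfold le at *
  rw [← h2, ← A.add_assoc, h1]

lemma le_antisymm' {x y : S} (h1 : A.le x y) (h2 : A.le y x) : x = y := by
  unfold le at *
  rw [← h2, A.add_comm, h1]

lemma le_add_left' (x y : S) : A.le x (A.add x y) := by
  unfold le
  rw [← A.add_assoc, A.add_idem]

lemma le_add_right' (x y : S) : A.le y (A.add x y) := by
  rw [A.add_comm]; exact A.le_add_left' y x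

lemma add_le' {x y z : S} (h1 : A.le x z) (h2 : A.le y z) : A.le (A.add x y) z := by
  unfold le at *
  rw [A.add_assoc, h2, h1]

lemma inf_exists (hA : A.BComplete) {X : Set S} (hX : X.Nonempty) :
    ∃ m, A.IsInf X m := by
  obtain ⟨a, ha⟩ := hX
  obtain ⟨m, hm⟩ := hA {b | A.LB X b} ⟨a, fun b hb => hb a ha⟩
  exact ⟨m, fun k hk => hm.2 k fun b hb => hb k hk, fun b hb => hm.1 b hb⟩

lemma isInf_unique {X : Set S} {m m' : S} (h1 : A.IsInf X m) (h2 : A.IsInf X m') :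
    m = m' :=
  A.le_antisymm' (h2.2 m h1.1) (h1.2 m' h2.1)

end IdemSemigroup

section Helpers
variable {K V : Type*} {F : IdemSemifield K} (B : IdemBSpace F V)

lemma mul_mono' (F : IdemSemifield K) (u : K) {p q : K}
    (h : F.toIdemSemigroup.le p q) :
    F.toIdemSemigroup.le (F.mul u p) (F.mul u q) := by
  show F.add _ _ = _
  rw [← F.left_distrib]
  exact congrArg (F.mul u) h

lemma smul_mono_k' {a b : K} (y : V) (h : F.toIdemSemigroup.le a b) :
    B.toIdemSemigroup.le (B.smul a y) (B.smul b y) := by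
  show B.add _ _ = _
  rw [← B.add_smul]
  exact congrArg (fun c => B.smul c y) h

lemma smul_mono_v' (a : K) {u v : V} (h : B.toIdemSemigroup.le u v) :
    B.toIdemSemigroup.le (B.smul a u) (B.smul a v) := by
  show B.add _ _ = _
  rw [← B.smul_add]
  exact congrArg (B.smul a) h

end Helpers

/-- For an Archimedean element x of a b-space, x*(y) = inf{k : k⊙x ≽ y} is a
well-defined b-linear functional with x*(y) ⊙ x ≽ y. -/
theorem stmt7 {K V : Type*} (F : IdemSemifield K) (hF : F.BComplete)
    (B : IdemBSpace F V) (x : V) (hx : B.ArchElem x) :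
    ∃ f : V → K, B.IsStar x f ∧ B.BLinearFun f ∧
      ∀ y, B.le y (B.smul (f y) x) := by
  classical
  have hinf : ∀ y : V, ∃ m, F.toIdemSemigroup.IsInf {k | B.le y (B.smul k x)} m :=
    fun y => F.toIdemSemigroup.inf_exists hF (hx y)
  choose f hf using hinf
  -- closure of S_y under bounded nonempty infs
  have closure : ∀ (y : V) (Q : Set K) (m : K), Q.Nonempty →
      (∃ b, F.toIdemSemigroup.UB Q b) →
      (∀ k ∈ Q, B.le y (B.smul k x)) → F.toIdemSemigroup.IsInf Q m →
      B.le y (B.smul m x) := by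
    intro y Q m hQne hQb hQS hm
    have h := B.smul_inf Q x m hQne hQb hm
    exact h.2 y (by rintro _ ⟨k, hk, rfl⟩; exact hQS k hk)
  have key : ∀ y, B.le y (B.smul (f y) x) := by
    intro y
    obtain ⟨a0, ha0⟩ := hx y
    set S := {k | B.le y (B.smul k x)} with hS
    set Q := {k | k ∈ S ∧ F.toIdemSemigroup.le k a0} with hQdef
    have hQne : Q.Nonempty := ⟨a0, ha0, F.toIdemSemigroup.le_refl' a0⟩
    have hQb : ∃ b, F.toIdemSemigroup.UB Q b := ⟨a0, fun k hk => hk.2⟩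
    obtain ⟨m, hm⟩ := F.toIdemSemigroup.inf_exists hF hQne
    have hymx : B.le y (B.smul m x) := closure y Q m hQne hQb (fun k hk => hk.1) hm
    have hmS : F.toIdemSemigroup.IsInf S m := by
      constructor
      · intro k hk
        have hpne : ({k, a0} : Set K).Nonempty := ⟨k, Or.inl rfl⟩
        have hpb : ∃ b, F.toIdemSemigroup.UB ({k, a0} : Set K) b := by
          refine ⟨F.add k a0, ?_⟩
          rintro k' (rfl | rfl)
          · exact F.toIdemSemigroup.le_add_left' k' a0
          · exact F.toIdemSemigroup.le_add_right' k k'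
        obtain ⟨n, hn⟩ := F.toIdemSemigroup.inf_exists hF hpne
        have hmem : ∀ k' ∈ ({k, a0} : Set K), B.le y (B.smul k' x) := by
          rintro k' (rfl | rfl)
          · exact hk
          · exact ha0
        have hnS : B.le y (B.smul n x) := closure y {k, a0} n hpne hpb hmem hn
        have hnQ : n ∈ Q := ⟨hnS, hn.1 a0 (Or.inr rfl)⟩
        exact F.toIdemSemigroup.le_trans' (hm.1 n hnQ) (hn.1 k (Or.inl rfl))
      · intro b hb
        exact hm.2 b fun k hk => hb k hk.1
    rw [F.toIdemSemigroup.isInf_unique (hf y) hmS]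
    exact hymx
  have fmono : ∀ {y z : V}, B.toIdemSemigroup.le y z →
      F.toIdemSemigroup.le (f y) (f z) := by
    intro y z h
    exact (hf z).2 (f y) fun k hk =>
      (hf y).1 k (B.toIdemSemigroup.le_trans' h hk)
  have fadd : ∀ y z, f (B.add y z) = F.add (f y) (f z) := by
    intro y z
    have h1 : F.toIdemSemigroup.le (F.add (f y) (f z)) (f (B.add y z)) :=
      F.toIdemSemigroup.add_le'
        (fmono (B.toIdemSemigroup.le_add_left' y z))
        (fmono (B.toIdemSemigroup.le_add_right' y z))
    have h2 : F.toIdemSemigroup.le (f (B.add y z)) (F.add (f y) (f z)) := by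
      apply (hf (B.add y z)).1
      show B.toIdemSemigroup.le (B.add y z) (B.smul (F.add (f y) (f z)) x)
      rw [B.add_smul]
      exact B.toIdemSemigroup.add_le'
        (B.toIdemSemigroup.le_trans' (key y)
          (B.toIdemSemigroup.le_add_left' _ _))
        (B.toIdemSemigroup.le_trans' (key z)
          (B.toIdemSemigroup.le_add_right' _ _))
    exact F.toIdemSemigroup.le_antisymm' h2 h1
  have fsmul : ∀ (a : K) y, f (B.smul a y) = F.mul a (f y) := by
    intro a y
    by_cases ha : a = F.zero
    · subst ha
      rw [B.zero_smul y]
      have hz : F.toIdemSemigroup.IsInf {k | B.le B.zero (B.smul k x)} F.zero :=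
        ⟨fun k _ => F.zero_add k, fun b hb => hb F.zero (B.zero_add _)⟩
      rw [F.toIdemSemigroup.isInf_unique (hf B.zero) hz, F.zero_mul]
    · obtain ⟨c, hac, hca⟩ := F.inv_exists a ha
      have hclaim : F.toIdemSemigroup.IsInf
          {k | B.le (B.smul a y) (B.smul k x)} (F.mul a (f y)) := by
        constructor
        · intro k hk
          have h1 : B.toIdemSemigroup.le y (B.smul (F.mul c k) x) := by
            have h := smul_mono_v' B c hk
            rw [B.smul_smul, B.smul_smul, hca, B.one_smul] at h
            exact h
          have h2 : F.toIdemSemigroup.le (f y) (F.mul c k) := (hf y).1 _ h1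
          have h3 := mul_mono' F a h2
          rw [← F.mul_assoc, hac, F.one_mul] at h3
          exact h3
        · intro b hb
          have h2 : F.toIdemSemigroup.le (F.mul c b) (f y) := by
            apply (hf y).2
            intro k hk
            have hm : B.toIdemSemigroup.le (B.smul a y) (B.smul (F.mul a k) x) := by
              have h := smul_mono_v' B a hk
              rw [B.smul_smul] at h
              exact h
            have h3 := mul_mono' F c (hb _ hm)
            rw [← F.mul_assoc, hca, F.one_mul] at h3
            exact h3
          have h4 := mul_mono' F a h2
          have h1 : F.toIdemSemigroup.le b (F.mul a (F.mul c b)) := by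
            rw [← F.mul_assoc, hac, F.one_mul]
            exact F.toIdemSemigroup.le_refl' b
          exact F.toIdemSemigroup.le_trans' h1 h4
      exact F.toIdemSemigroup.isInf_unique (hf (B.smul a y)) hclaim
  have fsup : ∀ (X : Set V) s, B.IsSup X s →
      F.toIdemSemigroup.IsSup (f '' X) (f s) := by
    intro X s hs
    constructor
    · rintro _ ⟨y, hy, rfl⟩
      exact fmono (hs.1 y hy)
    · intro b hb
      apply (hf s).1
      show B.toIdemSemigroup.le s (B.smul b x)
      apply hs.2
      intro y hy
      exact B.toIdemSemigroup.le_trans' (key y)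
        (smul_mono_k' B x (hb (f y) ⟨y, hy, rfl⟩))
  exact ⟨f, hf, ⟨fadd, fsmul, fsup⟩, key⟩
end

section
/- Any wo-closed subspace of an Archimedean idempotent b-space is itself an Archimedean space. -/
namespace IdemBSpaceAux

variable {K V : Type*} {F : IdemSemifield K}

lemma ble_refl (B : IdemBSpace F V) (x : V) : B.le x x := B.add_idem x

lemma ble_trans (B : IdemBSpace F V) {x y z : V} (h1 : B.le x y) (h2 : B.le y z) :
    B.le x z := by
  simp only [IdemBSpace.le, IdemSemigroup.le] at *
  rw [← h2, ← B.add_assoc, h1]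

lemma ble_antisymm (B : IdemBSpace F V) {x y : V} (h1 : B.le x y) (h2 : B.le y x) :
    x = y := by
  simp only [IdemBSpace.le, IdemSemigroup.le] at *
  calc x = B.add y x := h2.symm
  _ = B.add x y := (B.add_comm x y).symm
  _ = y := h1

lemma smul_mono (B : IdemBSpace F V) (k : K) {x y : V} (h : B.le x y) :
    B.le (B.smul k x) (B.smul k y) := by
  simp only [IdemBSpace.le, IdemSemigroup.le] at *
  rw [← B.smul_add, h]

lemma bot_le (B : IdemBSpace F V) (x : V) : B.le B.zero x := B.zero_add x

lemma bot_mem (B : IdemBSpace F V) {W : Set V} (hwo : B.WOClosed W) : B.zero ∈ W := by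
  refine (hwo ∅ (Set.empty_subset W) (fun x hx => hx.elim)).1 B.zero
    ⟨fun x hx => hx.elim, fun b _ => B.zero_add b⟩

/-- The supremum (taken in `V`) of any subset of a wo-closed subspace belongs to it. -/
lemma sup_mem (B : IdemBSpace F V) {W : Set V} (hsub : B.Subspace W) (hwo : B.WOClosed W)
    {S : Set V} (hS : S ⊆ W) {σ : V} (hσ : B.IsSup S σ) : σ ∈ W := by
  letI : Preorder V :=
    { le := B.le
      le_refl := ble_refl B
      le_trans := fun _ _ _ => ble_trans B }
  set Z : Set V := {z | z ∈ W ∧ B.le z σ} with hZdef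
  obtain ⟨m, hm⟩ : ∃ m, Maximal (· ∈ Z) m := by
    apply zorn_le₀
    intro c hcZ hc
    have hchain : B.Chain c := by
      intro x hx y hy
      rcases eq_or_ne x y with rfl | hne
      · exact Or.inl (ble_refl B x)
      · exact hc hx hy hne
    obtain ⟨t, ht⟩ := B.bcomplete c ⟨σ, fun x hx => (hcZ hx).2⟩
    exact ⟨t, ⟨(hwo c (fun x hx => (hcZ hx).1) hchain).1 t ht,
      ht.2 σ (fun x hx => (hcZ hx).2)⟩, fun z hz => ht.1 z hz⟩
  have hub : B.toIdemSemigroup.UB S m := by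
    intro y hy
    have hmem : B.add m y ∈ Z := by
      refine ⟨hsub.1 m hm.1.1 y (hS hy), ?_⟩
      show B.add (B.add m y) σ = σ
      rw [B.add_assoc, hσ.1 y hy, hm.1.2]
    have hmle : B.le m (B.add m y) := by
      show B.add m (B.add m y) = B.add m y
      rw [← B.add_assoc, B.add_idem]
    have hylem : B.le y (B.add m y) := by
      show B.add y (B.add m y) = B.add m y
      rw [B.add_comm m y, ← B.add_assoc, B.add_idem]
    exact ble_trans B hylem (hm.2 hmem hmle)
  have : σ = m := ble_antisymm B (hσ.2 m hub) hm.1.2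
  rw [this]
  exact hm.1.1

end IdemBSpaceAux

/-- Any wo-closed subspace of an Archimedean idempotent b-space is Archimedean. -/
theorem stmt9 {K V : Type*} (F : IdemSemifield K) (hF : F.BComplete)
    (B : IdemBSpace F V) (hA : B.ArchSpace)
    (W : Set V) (hsub : B.Subspace W) (hwo : B.WOClosed W) :
    B.ArchOn W := by
  open IdemBSpaceAux in
  obtain ⟨x₀, harch, f₀, hstar, hcont⟩ := hA
  set S : Set V := {y | y ∈ W ∧ B.le y x₀} with hSdef
  obtain ⟨σ, hσ⟩ := B.bcomplete S ⟨x₀, fun y hy => hy.2⟩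
  have hσW : σ ∈ W := sup_mem B hsub hwo (fun y hy => hy.1) hσ
  have hσx₀ : B.le σ x₀ := hσ.2 x₀ (fun y hy => hy.2)
  have hsets : ∀ y ∈ W, {k | B.le y (B.smul k σ)} = {k | B.le y (B.smul k x₀)} := by
    intro y hyW
    ext k
    simp only [Set.mem_setOf_eq]
    constructor
    · intro h
      exact ble_trans B h (smul_mono B k hσx₀)
    · intro h
      by_cases hk : k = F.zero
      · subst hk
        rw [B.zero_smul] at h ⊢
        exact h
      · obtain ⟨k', hk1, hk2⟩ := F.inv_exists k hk
        have h1 : B.le (B.smul k' y) x₀ := by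
          have h2 := smul_mono B k' h
          rwa [B.smul_smul, hk2, B.one_smul] at h2
        have h3 : B.le (B.smul k' y) σ := hσ.1 _ ⟨hsub.2 k' y hyW, h1⟩
        have h4 := smul_mono B k h3
        rwa [B.smul_smul, hk1, B.one_smul] at h4
  refine ⟨σ, hσW, ?_, f₀, ?_, ?_, ?_⟩
  · intro y hy
    obtain ⟨a, ha⟩ := harch y
    refine ⟨a, ?_⟩
    have : a ∈ {k | B.le y (B.smul k σ)} := by
      rw [hsets y hy]; exact ha
    exact this
  · intro y hy
    rw [hsets y hy]
    exact hstar y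
  · intro X _ hchain s _ hsup
    exact hcont.1 X hchain s hsup
  · intro X _ hchain hne s _ hsup
    exact hcont.2 X hchain hne s hsup
end

section
/- For any idempotent b-space V over a b-complete idempotent semifield K and any topological space X, the set USC(X, V) of bounded upper semicontinuous maps X → V is a ∧-subspace of the b-space B(X, V) of all bounded maps with pointwise operations. -/
section Aux
variable {K V : Type*} {F : IdemSemifield K} (B : IdemBSpace F V)

lemma aux_le_trans {x y z : V} (h1 : B.le x y) (h2 : B.le y z) : B.le x z := by
  unfold IdemBSpace.le IdemSemigroup.le at *
  rw [← h2, ← B.add_assoc, h1]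

lemma aux_le_smul {x y : V} (a : K) (h : B.le x y) : B.le (B.smul a x) (B.smul a y) := by
  unfold IdemBSpace.le IdemSemigroup.le at *
  rw [← B.smul_add, h]

lemma aux_zero_le (x : V) : B.le B.zero x := B.zero_add x

end Aux

/-- USC(X,V) is a ∧-subspace of the b-space B(X,V) of bounded maps: it is closed
under scalar multiplication and under greatest lower bounds (in B(X,V)) of its
nonempty subsets. -/
theorem stmt16 {K V : Type*} (F : IdemSemifield K) (hF : F.BComplete)
    (B : IdemBSpace F V) (X : Type*) [TopologicalSpace X] :
    (∀ (a : K), ∀ f : X → V,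
      ((∃ b, ∀ t, B.le (f t) b) ∧ ∀ b, IsClosed {t | B.le b (f t)}) →
      ((∃ b, ∀ t, B.le (B.smul a (f t)) b) ∧
        ∀ b, IsClosed {t | B.le b (B.smul a (f t))})) ∧
    (∀ S : Set (X → V),
      (∀ f ∈ S, (∃ b, ∀ t, B.le (f t) b) ∧ ∀ b, IsClosed {t | B.le b (f t)}) →
      S.Nonempty →
      ∀ g : X → V, (∃ b, ∀ t, B.le (g t) b) →
        ((∀ f ∈ S, ∀ t, B.le (g t) (f t)) ∧
          ∀ h : X → V, (∃ b, ∀ t, B.le (h t) b) →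
            (∀ f ∈ S, ∀ t, B.le (h t) (f t)) → ∀ t, B.le (h t) (g t)) →
        (∀ b, IsClosed {t | B.le b (g t)})) := by
  constructor
  · rintro a f ⟨⟨b0, hb0⟩, hcl⟩
    refine ⟨⟨B.smul a b0, fun t => aux_le_smul B a (hb0 t)⟩, ?_⟩
    intro c
    by_cases ha : a = F.zero
    · subst ha
      by_cases h : B.le c B.zero
      · have : {t | B.le c (B.smul F.zero (f t))} = Set.univ := by
          ext t; simp [B.zero_smul, h]
        rw [this]; exact isClosed_univ
      · have : {t | B.le c (B.smul F.zero (f t))} = ∅ := by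
          ext t; simp [B.zero_smul, h]
        rw [this]; exact isClosed_empty
    · obtain ⟨y, hay, hya⟩ := F.inv_exists a ha
      have : {t | B.le c (B.smul a (f t))} = {t | B.le (B.smul y c) (f t)} := by
        ext t
        constructor
        · intro h
          have := aux_le_smul B y h
          rwa [B.smul_smul, hya, B.one_smul] at this
        · intro h
          have := aux_le_smul B a h
          rwa [B.smul_smul, hay, B.one_smul] at this
      rw [this]; exact hcl _
  · rintro S hS ⟨f0, hf0⟩ g hgbd ⟨hlow, hgr⟩ b
    obtain ⟨b0, hb0⟩ := (hS f0 hf0).1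
    -- pointwise inf function
    have hinf : ∀ t : X, ∃ s : V, (∀ f ∈ S, B.le s (f t)) ∧
        ∀ w, (∀ f ∈ S, B.le w (f t)) → B.le w s := by
      intro t
      have hbdd : ∃ u, B.toIdemSemigroup.UB {w | ∀ f ∈ S, B.le w (f t)} u :=
        ⟨f0 t, fun w hw => hw f0 hf0⟩
      obtain ⟨s, hsUB, hsmin⟩ := B.bcomplete _ hbdd
      refine ⟨s, ?_, fun w hw => hsUB w hw⟩
      intro f hf
      exact hsmin (f t) (fun w hw => hw f hf)
    choose sfun hs1 hs2 using hinf
    have hsg : ∀ t, B.le (sfun t) (g t) := by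
      apply hgr
      · exact ⟨b0, fun t => aux_le_trans B (hs1 t f0 hf0) (hb0 t)⟩
      · intro f hf t; exact hs1 t f hf
    have hset : {t | B.le b (g t)} = ⋂ f ∈ S, {t | B.le b (f t)} := by
      ext t
      simp only [Set.mem_setOf_eq, Set.mem_iInter]
      constructor
      · intro h f hf
        exact aux_le_trans B h (hlow f hf t)
      · intro h
        exact aux_le_trans B (hs2 t b h) (hsg t)
    rw [hset]
    exact isClosed_biInter fun f hf => (hS f hf).2 b
end

section
/- If V is a boundedly complete lattice and X a topological space, then USC(X, V), the set of bounded upper semicontinuous maps X → V, is a boundedly complete lattice with respect to the pointwise order. -/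
/-- Bounded upper semicontinuous maps into a boundedly complete lattice form a
boundedly complete lattice under the pointwise order. -/
theorem stmt19 {V : Type*} [Lattice V]
    (hV : ∀ S : Set V, S.Nonempty → BddAbove S → ∃ s, IsLUB S s)
    (X : Type*) [TopologicalSpace X] :
    (∀ f g : {f : X → V // (∃ b, ∀ t, f t ≤ b) ∧ ∀ b, IsClosed {t | b ≤ f t}},
      ∃ s, IsLUB {f, g} s) ∧
    (∀ f g : {f : X → V // (∃ b, ∀ t, f t ≤ b) ∧ ∀ b, IsClosed {t | b ≤ f t}},
      ∃ i, IsGLB {f, g} i) ∧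
    (∀ S : Set {f : X → V // (∃ b, ∀ t, f t ≤ b) ∧ ∀ b, IsClosed {t | b ≤ f t}},
      S.Nonempty → BddAbove S → ∃ s, IsLUB S s) := by
  classical
  -- GLBs of nonempty bounded-below sets in V
  have glbV : ∀ T : Set V, T.Nonempty → BddBelow T → ∃ s, IsGLB T s := by
    rintro T hT ⟨b, hb⟩
    obtain ⟨t0, ht0⟩ := hT
    obtain ⟨s, hs⟩ := hV (lowerBounds T) ⟨b, hb⟩ ⟨t0, fun x hx => hx ht0⟩
    refine ⟨s, fun t ht => hs.2 fun x hx => hx ht, fun c hc => hs.1 hc⟩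
  -- main part: bounded sups
  have key : ∀ S : Set {f : X → V // (∃ b, ∀ t, f t ≤ b) ∧ ∀ b, IsClosed {t | b ≤ f t}},
      S.Nonempty → BddAbove S → ∃ s, IsLUB S s := by
    rintro S ⟨f0, hf0⟩ ⟨u, hu⟩
    have hA : ∀ t : X, ∃ s, IsGLB {v | ∃ h ∈ upperBounds S, h.1 t = v} s := by
      intro t
      refine glbV _ ⟨u.1 t, u, hu, rfl⟩ ⟨f0.1 t, ?_⟩
      rintro v ⟨h, hh, rfl⟩
      exact (hh hf0) t
    choose s hs using hA
    have hsle : ∀ (h) (_ : h ∈ upperBounds S) (t : X), s t ≤ h.1 t := by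
      intro h hh t
      exact (hs t).1 ⟨h, hh, rfl⟩
    have hges : ∀ (f) (_ : f ∈ S) (t : X), f.1 t ≤ s t := by
      intro f hf t
      refine (hs t).2 ?_
      rintro v ⟨h, hh, rfl⟩
      exact (hh hf) t
    have hbdd : ∃ b, ∀ t, s t ≤ b := by
      obtain ⟨b, hb⟩ := u.2.1
      exact ⟨b, fun t => (hsle u hu t).trans (hb t)⟩
    have hcl : ∀ b, IsClosed {t | b ≤ s t} := by
      intro b
      have heq : {t | b ≤ s t} = ⋂ h : upperBounds S, {t | b ≤ (h : _).1.1 t} := by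
        ext t
        rw [Set.mem_iInter]
        constructor
        · rintro hb ⟨h, hh⟩
          exact hb.trans (hsle h hh t)
        · intro hb
          refine (hs t).2 ?_
          rintro v ⟨h, hh, rfl⟩
          exact hb ⟨h, hh⟩
      rw [heq]
      exact isClosed_iInter fun h => h.1.2.2 b
    refine ⟨⟨s, hbdd, hcl⟩, ?_, ?_⟩
    · intro f hf
      exact fun t => hges f hf t
    · intro h hh
      exact fun t => hsle h hh t
  refine ⟨?_, ?_, key⟩
  · intro f g
    obtain ⟨bf, hbf⟩ := f.2.1
    obtain ⟨bg, hbg⟩ := g.2.1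
    have hcl : ∀ b : V, IsClosed {t : X | b ≤ bf ⊔ bg} := by
      intro b
      by_cases h : b ≤ bf ⊔ bg
      · have : {t : X | b ≤ bf ⊔ bg} = Set.univ := by ext t; simp [h]
        rw [this]; exact isClosed_univ
      · have : {t : X | b ≤ bf ⊔ bg} = ∅ := by ext t; simp [h]
        rw [this]; exact isClosed_empty
    refine key {f, g} ⟨f, Or.inl rfl⟩
      ⟨⟨fun _ => bf ⊔ bg, ⟨bf ⊔ bg, fun _ => le_rfl⟩, hcl⟩, ?_⟩
    rintro h (rfl | rfl)
    · exact fun t => (hbf t).trans le_sup_left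
    · exact fun t => (hbg t).trans le_sup_right
  · intro f g
    have hcl : ∀ b, IsClosed {t | b ≤ f.1 t ⊓ g.1 t} := by
      intro b
      have heq : {t | b ≤ f.1 t ⊓ g.1 t} = {t | b ≤ f.1 t} ∩ {t | b ≤ g.1 t} := by
        ext t; simp [le_inf_iff]
      rw [heq]
      exact (f.2.2 b).inter (g.2.2 b)
    have hbdd : ∃ b, ∀ t, f.1 t ⊓ g.1 t ≤ b := by
      obtain ⟨b, hb⟩ := f.2.1
      exact ⟨b, fun t => inf_le_left.trans (hb t)⟩
    refine ⟨⟨fun t => f.1 t ⊓ g.1 t, hbdd, hcl⟩, ?_, ?_⟩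
    · rintro h (rfl | rfl)
      · exact fun t => inf_le_left
      · exact fun t => inf_le_right
    · intro b hb
      have h1 := hb (Set.mem_insert f {g})
      have h2 := hb (Set.mem_insert_of_mem f rfl)
      exact fun t => le_inf (h1 t) (h2 t)
end
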